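/- For any finite ground normal logic program P with encoded Boolean network f, the influence graph of f is a subgraph of the dependency graph of P: every positive (resp. negative) arc of ig(f) is a positive (resp. negative) arc of dg(P). -/

import Mathlib

/-- Three truth values: false, unknown, true. -/
inductive TV3 | fls | unk | tru
  deriving DecidableEq

namespace TV3

def toFin : TV3 → Fin 3
  | fls => 0 | unk => 1 | tru => 2

/-- The truth order f < u < t. -/
instance : LinearOrder TV3 :=
  LinearOrder.lift' toFin (by intro a b h; cases a <;> cases b <;> simp_all [toFin])

instance : BoundedOrder TV3 where
  top := tru
  bot := fls
  le_top x := by cases x <;> decide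
  bot_le x := by cases x <;> decide

/-- Kleene negation. -/
def neg : TV3 → TV3 | fls => tru | unk => unk | tru => fls

end TV3

def ofBool : Bool → TV3 | true => .tru | false => .fls

/-- The subset order on truth values: f <ₛ u and t <ₛ u. -/
def leS (x y : TV3) : Prop := x = y ∨ y = TV3.unk

section LP

variable {A : Type*} [Fintype A] [DecidableEq A]

/-- Pointwise subset order on 3-valued interpretations. -/
def leSI (I₁ I₂ : A → TV3) : Prop := ∀ a, leS (I₁ a) (I₂ a)

/-- The set of 2-valued interpretations compatible with a 3-valued one. -/
def gamma (I : A → TV3) : Set (A → Bool) :=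
  {J | ∀ a, I a ≠ TV3.unk → ofBool (J a) = I a}

/-- A ground normal rule: head ← pos, ∼neg. -/
structure Rule (A : Type*) where
  head : A
  pos : Finset A
  neg : Finset A
  deriving DecidableEq

/-- A finite ground normal logic program. -/
abbrev Program (A : Type*) [DecidableEq A] := Finset (Rule A)

/-- Immediate consequence operator T_P. -/
def TP (P : Program A) (J : A → Bool) (a : A) : Bool :=
  decide (∃ r ∈ P, r.head = a ∧ (∀ p ∈ r.pos, J p = true) ∧ (∀ q ∈ r.neg, J q = false))

/-- 2-valued value of the body formula of a rule. -/
noncomputable def bodyVal2 (r : Rule A) (s : A → Bool) : Bool :=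
  (r.pos.inf s) && !(r.neg.sup s)

/-- The Boolean network encoding of a program: f_v = ⋁_{head r = v} body-formula(r). -/
noncomputable def encBN (P : Program A) : A → (A → Bool) → Bool :=
  fun v s => P.sup fun r => if r.head = v then bodyVal2 r s else false

/-- 3-valued (Kleene) value of the body formula of a rule. -/
def bodyVal3 (r : Rule A) (I : A → TV3) : TV3 :=
  (r.pos.inf I) ⊓ (r.neg.inf fun q => TV3.neg (I q))

/-- 3-valued evaluation of rhs(a), the disjunction of bodies of rules with head a. -/
def rhs3 (P : Program A) (I : A → TV3) (a : A) : TV3 :=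
  P.sup fun r => if r.head = a then bodyVal3 r I else TV3.fls

/-- Signs of arcs. -/
inductive Sign | pos | neg
  deriving DecidableEq

/-- A signed directed graph on A. -/
abbrev SGraph (A : Type*) := A → A → Sign → Prop

def posArc (P : Program A) (u v : A) : Prop := ∃ r ∈ P, r.head = v ∧ u ∈ r.pos
def negArc (P : Program A) (u v : A) : Prop := ∃ r ∈ P, r.head = v ∧ u ∈ r.neg

/-- Dependency graph of a program. -/
def dg (P : Program A) : SGraph A := fun u v s =>
  match s with
  | Sign.pos => posArc P u v
  | Sign.neg => negArc P u v

/-- Influence graph of a Boolean network. -/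
def ig (f : A → (A → Bool) → Bool) : SGraph A := fun u v s =>
  match s with
  | Sign.pos => ∃ x : A → Bool, f v (Function.update x u false) < f v (Function.update x u true)
  | Sign.neg => ∃ x : A → Bool, f v (Function.update x u true) < f v (Function.update x u false)

/-- A (closed signed) cycle in a signed graph: vertices v₀,…,vₙ with arcs
vᵢ → vᵢ₊₁ (indices mod n+1) carrying the given signs. -/
structure SCycle (G : SGraph A) where
  n : ℕ
  vtx : Fin (n + 1) → A
  sgn : Fin (n + 1) → Sign
  arc : ∀ i, G (vtx i) (vtx (i + 1)) (sgn i)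

/-- A cycle is negative if it has an odd number of negative arcs. -/
def SCycle.IsNeg {G : SGraph A} (c : SCycle G) : Prop :=
  (Finset.univ.filter fun i => c.sgn i = Sign.neg).card % 2 = 1

/-- A cycle is positive if it has an even number of negative arcs. -/
def SCycle.IsPos {G : SGraph A} (c : SCycle G) : Prop :=
  (Finset.univ.filter fun i => c.sgn i = Sign.neg).card % 2 = 0

/-- U is a positive feedback vertex set: it meets every positive cycle. -/
def IsPFVS (G : SGraph A) (U : Finset A) : Prop :=
  ∀ c : SCycle G, c.IsPos → ∃ i, c.vtx i ∈ U

/-- P is tight: its positive dependency graph is acyclic. -/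
def Tight (P : Program A) : Prop :=
  IsEmpty (SCycle (fun u v s => s = Sign.pos ∧ posArc P u v))

/-- Synchronous update of a Boolean network. -/
def syncNext (f : A → (A → Bool) → Bool) (x : A → Bool) : A → Bool := fun v => f v x

/-- Fully asynchronous transition. -/
def asyncStep (f : A → (A → Bool) → Bool) (x y : A → Bool) : Prop :=
  ∃ v, f v x ≠ x v ∧ y = Function.update x v (f v x)

/-- Nonempty trap set of the asynchronous state transition graph. -/
def IsTrapSet (f : A → (A → Bool) → Bool) (S : Set (A → Bool)) : Prop :=
  S.Nonempty ∧ ∀ x ∈ S, ∀ y, asyncStep f x y → y ∈ S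

/-- Attractor: subset-minimal nonempty trap set. -/
def IsAttractor (f : A → (A → Bool) → Bool) (S : Set (A → Bool)) : Prop :=
  IsTrapSet f S ∧ ∀ T, IsTrapSet f T → T ⊆ S → T = S

def IsFixedPoint (f : A → (A → Bool) → Bool) (x : A → Bool) : Prop :=
  syncNext f x = x

/-- Trap space of a BN under synchronous update. -/
def IsSyncTrapSpace (f : A → (A → Bool) → Bool) (m : A → TV3) : Prop :=
  ∀ s ∈ gamma m, syncNext f s ∈ gamma m

/-- Trap space of a BN under asynchronous update. -/
def IsAsyncTrapSpace (f : A → (A → Bool) → Bool) (m : A → TV3) : Prop :=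
  ∀ s ∈ gamma m, ∀ y, asyncStep f s y → y ∈ gamma m

/-- Supported trap space: γ(I) is closed under T_P. -/
def IsSuppTrapSpace (P : Program A) (I : A → TV3) : Prop :=
  ∀ J ∈ gamma I, TP P J ∈ gamma I

/-- Supported partial model: 3-valued model of Clark's completion. -/
def IsSuppPartialModel (P : Program A) (I : A → TV3) : Prop :=
  ∀ a, I a = rhs3 P I a

/-- The 3-valued one-step operator of the Przymusinski reduct P^I applied to K:
negative literals are evaluated under I (Kleene negation), positive ones under K. -/
def Phi (P : Program A) (I K : A → TV3) (a : A) : TV3 :=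
  P.sup fun r =>
    if r.head = a then (r.pos.inf K) ⊓ (r.neg.inf fun q => TV3.neg (I q)) else TV3.fls

/-- Stable partial model: I is the ≤ₜ-least 3-valued model of the reduct P^I. -/
def IsStablePartial (P : Program A) (I : A → TV3) : Prop :=
  (∀ a, Phi P I I a ≤ I a) ∧
    ∀ K : A → TV3, (∀ a, Phi P I K a ≤ K a) → ∀ a, I a ≤ K a

/-- Regular model: ≤ₛ-minimal stable partial model. -/
def IsRegularModel (P : Program A) (I : A → TV3) : Prop :=
  IsStablePartial P I ∧ ∀ I', IsStablePartial P I' → leSI I' I → I' = I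

def Is2Valued (I : A → TV3) : Prop := ∀ a, I a ≠ TV3.unk

/-- The one-step operator of the Gelfond–Lifschitz reduct P^J applied to K. -/
noncomputable def PhiB (P : Program A) (J K : A → Bool) (a : A) : Bool :=
  P.sup fun r =>
    if r.head = a then ((r.pos.inf K) && !(r.neg.sup J)) else false

/-- Stable model: J is the least model of the Gelfond–Lifschitz reduct P^J. -/
def IsStableModel (P : Program A) (J : A → Bool) : Prop :=
  (∀ a, PhiB P J J a ≤ J a) ∧
    ∀ K : A → Bool, (∀ a, PhiB P J K a ≤ K a) → ∀ a, J a ≤ K a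

/-- Every cycle of dg(P) contains no negative arc. -/
def LocallyStratified (P : Program A) : Prop :=
  ∀ c : SCycle (dg P), ∀ i, c.sgn i ≠ Sign.neg

def NoNegCycle (G : SGraph A) : Prop := ∀ c : SCycle G, ¬ c.IsNeg
def NoPosCycle (G : SGraph A) : Prop := ∀ c : SCycle G, ¬ c.IsPos

end LP

lemma bsup_true {β : Type*} {s : Finset β} {f : β → Bool} :
    s.sup f = true ↔ ∃ b ∈ s, f b = true := by
  classical
  induction s using Finset.induction with
  | empty => simp [Finset.sup_empty]
  | insert _ _ h ih =>
      rw [Finset.sup_insert]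
      simp only [Finset.mem_insert, Bool.sup_eq_bor, Bool.max_eq_or, Bool.or_eq_true, ih]
      constructor
      · rintro (h1 | ⟨b, hb, hfb⟩)
        · exact ⟨_, Or.inl rfl, h1⟩
        · exact ⟨b, Or.inr hb, hfb⟩
      · rintro ⟨b, (rfl | hb), hfb⟩
        · exact Or.inl hfb
        · exact Or.inr ⟨b, hb, hfb⟩

lemma binf_true {β : Type*} {s : Finset β} {f : β → Bool} :
    s.inf f = true ↔ ∀ b ∈ s, f b = true := by
  classical
  induction s using Finset.induction with
  | empty => simp [Finset.inf_empty]
  | insert _ _ h ih =>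
      rw [Finset.inf_insert]
      simp only [Finset.mem_insert, Bool.inf_eq_band, Bool.min_eq_and, Bool.and_eq_true, ih]
      constructor
      · rintro ⟨h1, h2⟩ b (rfl | hb)
        · exact h1
        · exact h2 b hb
      · intro hall
        exact ⟨hall _ (Or.inl rfl), fun b hb => hall b (Or.inr hb)⟩

lemma enc_true {A : Type*} [Fintype A] [DecidableEq A] {P : Program A} {v : A}
    {x : A → Bool} (h : encBN P v x = true) :
    ∃ r ∈ P, r.head = v ∧ (∀ p ∈ r.pos, x p = true) ∧ (∀ q ∈ r.neg, x q = false) := by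
  unfold encBN at h
  obtain ⟨r, hr, hval⟩ := bsup_true.mp h
  by_cases hh : r.head = v
  · rw [if_pos hh] at hval
    unfold bodyVal2 at hval
    rw [Bool.and_eq_true, Bool.not_eq_true', binf_true] at hval
    refine ⟨r, hr, hh, hval.1, fun q hq => ?_⟩
    by_contra hcon
    have : r.neg.sup x = true := bsup_true.mpr ⟨q, hq, by simpa using hcon⟩
    rw [this] at hval; exact absurd hval.2 (by simp)
  · rw [if_neg hh] at hval; exact absurd hval (by simp)

lemma enc_true_of {A : Type*} [Fintype A] [DecidableEq A] {P : Program A} {v : A}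
    {x : A → Bool} {r : Rule A} (hr : r ∈ P) (hh : r.head = v)
    (hp : ∀ p ∈ r.pos, x p = true) (hn : ∀ q ∈ r.neg, x q = false) :
    encBN P v x = true := by
  unfold encBN
  refine bsup_true.mpr ⟨r, hr, ?_⟩
  rw [if_pos hh]
  unfold bodyVal2
  rw [Bool.and_eq_true, Bool.not_eq_true']
  refine ⟨binf_true.mpr hp, ?_⟩
  rw [Bool.eq_false_iff]
  intro hcon
  obtain ⟨q, hq, hval⟩ := bsup_true.mp hcon
  rw [hn q hq] at hval; exact absurd hval (by simp)

/-- the influence graph of the encoded BN is a subgraph of the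
dependency graph of the program. -/
theorem stmt1 {A : Type*} [Fintype A] [DecidableEq A] (P : Program A)
    (u v : A) (s : Sign) (h : ig (encBN P) u v s) : dg P u v s := by
  cases s with
  | pos =>
    obtain ⟨x, hx⟩ := h
    have h1 : encBN P v (Function.update x u true) = true :=
      (Bool.lt_iff.mp hx).2
    have h0 : encBN P v (Function.update x u false) = false :=
      (Bool.lt_iff.mp hx).1
    obtain ⟨r, hr, hh, hp, hn⟩ := enc_true h1
    refine ⟨r, hr, hh, ?_⟩
    by_contra hu
    have : encBN P v (Function.update x u false) = true := by
      refine enc_true_of hr hh (fun p hp' => ?_) (fun q hq => ?_)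
      · have hpne : p ≠ u := fun he => hu (he ▸ hp')
        have := hp p hp'
        rwa [Function.update_of_ne hpne] at this ⊢
      · rcases eq_or_ne q u with he | he
        · rw [he, Function.update_self]
        · have := hn q hq
          rwa [Function.update_of_ne he] at this ⊢
    rw [this] at h0; exact absurd h0 (by simp)
  | neg =>
    obtain ⟨x, hx⟩ := h
    have h1 : encBN P v (Function.update x u false) = true :=
      (Bool.lt_iff.mp hx).2
    have h0 : encBN P v (Function.update x u true) = false :=
      (Bool.lt_iff.mp hx).1
    obtain ⟨r, hr, hh, hp, hn⟩ := enc_true h1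
    refine ⟨r, hr, hh, ?_⟩
    by_contra hu
    have : encBN P v (Function.update x u true) = true := by
      refine enc_true_of hr hh (fun p hp' => ?_) (fun q hq => ?_)
      · rcases eq_or_ne p u with he | he
        · rw [he, Function.update_self]
        · have := hp p hp'
          rwa [Function.update_of_ne he] at this ⊢
      · have hqne : q ≠ u := fun he => hu (he ▸ hq)
        have := hn q hq
        rwa [Function.update_of_ne hqne] at this ⊢
    rw [this] at h0; exact absurd h0 (by simp)
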